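/- Let Q ⊂ ℝ^s be a rational polyhedron. The following are equivalent: (a) Q ⊆ ℝ_+^s and Q is upward closed (if x ∈ Q and y ≥ x then y ∈ Q); (b) Q = ℝ_+^s + conv(α_1,...,α_r) for some α_1,...,α_r ∈ ℚ_+^s; (c) Q = {x : x ≥ 0, xD ≥ 1} for some rational matrix D with non-negative entries. -/

import Mathlib

set_option maxHeartbeats 1000000
open Finset
open scoped Pointwise
namespace Blk
variable {s : ℕ}

def dotp (a x : Fin s → ℝ) : ℝ := ∑ i, a i * x i

lemma dotp_add (a x y : Fin s → ℝ) : dotp a (x + y) = dotp a x + dotp a y := by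
  simp [dotp, mul_add, Finset.sum_add_distrib]

lemma dotp_smul (a : Fin s → ℝ) (c : ℝ) (x : Fin s → ℝ) : dotp a (c • x) = c * dotp a x := by
  simp only [dotp, Finset.mul_sum, Pi.smul_apply, smul_eq_mul]
  exact Finset.sum_congr rfl (fun i _ => by ring)

lemma single_sum_apply (mu : Fin s → ℝ) (j : Fin s) :
    (∑ i, mu i • (Pi.single i 1 : Fin s → ℝ)) j = mu j := by
  rw [Finset.sum_apply]
  simp [Pi.single_apply]

lemma dotp_single (a : Fin s → ℝ) (i : Fin s) : dotp a (Pi.single i 1 : Fin s → ℝ) = a i := by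
  unfold dotp
  simp [Pi.single_apply, mul_ite]

lemma dotp_single_sum (a mu : Fin s → ℝ) :
    dotp a (∑ i, mu i • (Pi.single i 1 : Fin s → ℝ)) = ∑ i, a i * mu i := by
  unfold dotp
  exact Finset.sum_congr rfl (fun i _ => by rw [single_sum_apply])

lemma dotp_sum {ι : Type*} (a : Fin s → ℝ) (t : Finset ι) (g : ι → Fin s → ℝ) :
    dotp a (∑ x ∈ t, g x) = ∑ x ∈ t, dotp a (g x) := by
  unfold dotp
  simp only [Finset.sum_apply, Finset.mul_sum]
  exact Finset.sum_comm

lemma dotp_sum_smul {r : ℕ} (a : Fin s → ℝ) (lam : Fin r → ℝ) (V : Fin r → Fin s → ℝ) :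
    dotp a (∑ v, lam v • V v) = ∑ v, lam v * dotp a (V v) := by
  rw [dotp_sum]
  exact Finset.sum_congr rfl (fun v _ => dotp_smul a (lam v) (V v))

lemma sum_update_real {n : ℕ} (f : Fin n → ℝ) (v : Fin n) (c : ℝ) :
    ∑ x, Function.update f v c x = (∑ x, f x) - f v + c := by
  rw [Finset.sum_update_of_mem (Finset.mem_univ v),
    ← Finset.add_sum_erase _ f (Finset.mem_univ v), Finset.erase_eq]
  ring

lemma sum_update_smul {n : ℕ} (f : Fin n → ℝ) (g : Fin n → Fin s → ℝ) (v : Fin n) (c : ℝ) :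
    ∑ x, Function.update f v c x • g x = (∑ x, f x • g x) - f v • g v + c • g v := by
  rw [← Finset.add_sum_erase _ (fun x => Function.update f v c x • g x) (Finset.mem_univ v),
    ← Finset.add_sum_erase _ (fun x => f x • g x) (Finset.mem_univ v)]
  have h1 : ∑ x ∈ univ.erase v, Function.update f v c x • g x
      = ∑ x ∈ univ.erase v, f x • g x := by
    refine Finset.sum_congr rfl (fun x hx => ?_)
    rw [Function.update_of_ne (Finset.ne_of_mem_erase hx)]
  rw [h1, Function.update_self]
  abel

noncomputable def segpt {r : ℕ} (V : Fin r → Fin s → ℝ) (a : Fin s → ℝ) (v w : Fin r) :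
    Fin s → ℝ :=
  ((dotp a (V w) - 1) / (dotp a (V w) - dotp a (V v))) • V v
    + (1 - (dotp a (V w) - 1) / (dotp a (V w) - dotp a (V v))) • V w

noncomputable def raypt {r : ℕ} (V : Fin r → Fin s → ℝ) (a : Fin s → ℝ) (v : Fin r)
    (i : Fin s) : Fin s → ℝ :=
  V v + (max 0 (1 - dotp a (V v)) / a i) • (Pi.single i 1 : Fin s → ℝ)

def GSet {r : ℕ} (V : Fin r → Fin s → ℝ) (a : Fin s → ℝ) : Set (Fin s → ℝ) :=
  {p | (∃ v, 1 ≤ dotp a (V v) ∧ p = V v) ∨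
       (∃ v w, dotp a (V v) < 1 ∧ 1 < dotp a (V w) ∧ p = segpt V a v w) ∨
       (∃ v i, dotp a (V v) < 1 ∧ 0 < a i ∧ p = raypt V a v i)}

lemma dotp_raypt {r : ℕ} (V : Fin r → Fin s → ℝ) (a : Fin s → ℝ) (v : Fin r) (i : Fin s)
    (hai : 0 < a i) : dotp a (raypt V a v i) = max (dotp a (V v)) 1 := by
  rw [raypt, dotp_add, dotp_smul, dotp_single, div_mul_cancel₀ _ (ne_of_gt hai)]
  rcases le_total 1 (dotp a (V v)) with h | h
  · rw [max_eq_left (by linarith), max_eq_left h]; ring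
  · rw [max_eq_right (by linarith), max_eq_right h]; ring

lemma dotp_segpt {r : ℕ} (V : Fin r → Fin s → ℝ) (a : Fin s → ℝ) (v w : Fin r)
    (hv : dotp a (V v) < 1) (hw : 1 < dotp a (V w)) : dotp a (segpt V a v w) = 1 := by
  have hne : dotp a (V w) - dotp a (V v) ≠ 0 := by linarith
  rw [segpt, dotp_add, dotp_smul, dotp_smul]
  field_simp
  ring

lemma core_done {r : ℕ} (V : Fin r → Fin s → ℝ) (a : Fin s → ℝ)
    (lam : Fin r → ℝ) (mu : Fin s → ℝ) (θ : ℝ) (q₀ : Fin s → ℝ)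
    (hlam : ∀ v, 0 ≤ lam v) (hmu : ∀ i, 0 ≤ mu i)
    (hθ : 0 ≤ θ) (hsum : (∑ v, lam v) + θ = 1)
    (hq₀ : θ = 0 ∨ q₀ ∈ convexHull ℝ (GSet V a))
    (hnd : ∀ v, lam v ≠ 0 → 1 ≤ dotp a (V v)) :
    ∃ q ∈ convexHull ℝ (GSet V a), ∀ j, q j ≤
      ((∑ v, lam v • V v) + (∑ i, mu i • (Pi.single i 1 : Fin s → ℝ)) + θ • q₀) j := by
  classical
  have hj₀ : ∃ j₀, j₀ ∈ convexHull ℝ (GSet V a) := by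
    rcases hq₀ with h0 | hmem
    · have hsum1 : (∑ v, lam v) = 1 := by rw [h0, add_zero] at hsum; exact hsum
      have : ∃ v, lam v ≠ 0 := by
        by_contra hc
        push_neg at hc
        simp [hc] at hsum1
      obtain ⟨v, hv⟩ := this
      exact ⟨V v, subset_convexHull ℝ _ (Or.inl ⟨v, hnd v hv, rfl⟩)⟩
    · exact ⟨q₀, hmem⟩
  obtain ⟨j₀, hj₀⟩ := hj₀
  set Z : Fin r ⊕ Unit → Fin s → ℝ := fun x =>
    Sum.elim (fun v => if lam v = 0 then j₀ else V v) (fun _ => if θ = 0 then j₀ else q₀) x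
    with hZ
  set W : Fin r ⊕ Unit → ℝ := Sum.elim lam (fun _ => θ) with hW
  have hmem : (∑ x, W x • Z x) ∈ convexHull ℝ (GSet V a) := by
    apply (convex_convexHull ℝ (GSet V a)).sum_mem
    · rintro (v | u) _
      · exact hlam v
      · exact hθ
    · rw [Fintype.sum_sum_type]
      simpa [hW] using hsum
    · rintro (v | u) _
      · by_cases h : lam v = 0
        · simp only [hZ, Sum.elim_inl, if_pos h]; exact hj₀
        · simp only [hZ, Sum.elim_inl, if_neg h]
          exact subset_convexHull ℝ _ (Or.inl ⟨v, hnd v h, rfl⟩)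
      · by_cases h : θ = 0
        · simp only [hZ, Sum.elim_inr, if_pos h]; exact hj₀
        · simp only [hZ, Sum.elim_inr, if_neg h]
          rcases hq₀ with h0 | hm
          · exact absurd h0 h
          · exact hm
  have hval : (∑ x, W x • Z x) = (∑ v, lam v • V v) + θ • q₀ := by
    rw [Fintype.sum_sum_type]
    congr 1
    · refine Finset.sum_congr rfl (fun v _ => ?_)
      by_cases h : lam v = 0
      · simp [hZ, hW, h]
      · simp [hZ, hW, h]
    · by_cases h : θ = 0
      · simp [hZ, hW, h]
      · simp [hZ, hW, h]
  refine ⟨∑ x, W x • Z x, hmem, fun j => ?_⟩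
  rw [hval]
  simp only [Pi.add_apply]
  have h1 := single_sum_apply mu j
  have h2 := hmu j
  nlinarith [h1, h2]

open scoped Classical in
noncomputable def meas {r : ℕ} (V : Fin r → Fin s → ℝ) (a : Fin s → ℝ)
    (lam : Fin r → ℝ) (mu : Fin s → ℝ) : ℕ :=
  (univ.filter (fun v => lam v ≠ 0 ∧ dotp a (V v) ≠ 1)).card
    + (univ.filter (fun i => mu i ≠ 0)).card


lemma core_main {r : ℕ} (V : Fin r → Fin s → ℝ) (a : Fin s → ℝ) :
    ∀ (n : ℕ) (lam : Fin r → ℝ) (mu : Fin s → ℝ) (θ : ℝ) (q₀ y : Fin s → ℝ),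
      meas V a lam mu ≤ n →
      (∀ v, 0 ≤ lam v) → (∀ i, 0 ≤ mu i) → (∀ i, mu i ≠ 0 → 0 < a i) →
      0 ≤ θ → (∑ v, lam v) + θ = 1 →
      (θ = 0 ∨ (q₀ ∈ convexHull ℝ (GSet V a) ∧ dotp a q₀ = 1)) →
      y = (∑ v, lam v • V v) + (∑ i, mu i • (Pi.single i 1 : Fin s → ℝ)) + θ • q₀ →
      1 ≤ dotp a y →
      ∃ q ∈ convexHull ℝ (GSet V a), ∀ j, q j ≤ y j := by
  classical
  intro n
  induction n with
  | zero =>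
    intro lam mu θ q₀ y hmeas hlam hmu hmsupp hθ hsum hq₀ hy hay
    subst hy
    refine core_done V a lam mu θ q₀ hlam hmu hθ hsum (hq₀.imp id And.left) ?_
    intro v hv
    by_contra hlt
    push_neg at hlt
    have hvmem : v ∈ univ.filter (fun v => lam v ≠ 0 ∧ dotp a (V v) ≠ 1) := by
      simp only [mem_filter, mem_univ, true_and]
      exact ⟨hv, ne_of_lt hlt⟩
    have h1 : 0 < (univ.filter (fun v => lam v ≠ 0 ∧ dotp a (V v) ≠ 1)).card :=
      Finset.card_pos.2 ⟨v, hvmem⟩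
    unfold meas at hmeas
    omega
  | succ n ih =>
    intro lam mu θ q₀ y hmeas hlam hmu hmsupp hθ hsum hq₀ hy hay
    by_cases hdef : ∃ v, lam v ≠ 0 ∧ dotp a (V v) < 1
    · obtain ⟨v, hv0, hvlt⟩ := hdef
      have hvpos : 0 < lam v := lt_of_le_of_ne (hlam v) (Ne.symm hv0)
      have hvfilter : v ∈ univ.filter (fun v => lam v ≠ 0 ∧ dotp a (V v) ≠ 1) := by
        simp only [mem_filter, mem_univ, true_and]
        exact ⟨hv0, ne_of_lt hvlt⟩
      by_cases hmu0 : ∃ i, mu i ≠ 0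
      · -- merge deficient vertex v with ray i
        obtain ⟨i, hi⟩ := hmu0
        have hai : 0 < a i := hmsupp i hi
        have hipos : 0 < mu i := lt_of_le_of_ne (hmu i) (Ne.symm hi)
        have hδ : 0 < 1 - dotp a (V v) := by linarith
        set d := dotp a (V v) with hd
        set β := min (lam v) (mu i * a i / (1 - d)) with hβ
        have hβpos : 0 < β := lt_min hvpos (by positivity)
        have hβlam : β ≤ lam v := min_le_left _ _
        have hβmu : β * (1 - d) / a i ≤ mu i := by
          rw [div_le_iff₀ hai]
          have h2 := min_le_right (lam v) (mu i * a i / (1 - d))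
          have h3 : (mu i * a i / (1 - d)) * (1 - d) = mu i * a i := by field_simp
          nlinarith [h2, h3]
        set R := raypt V a v i with hR
        have hRG : R ∈ GSet V a := Or.inr (Or.inr ⟨v, i, hvlt, hai, rfl⟩)
        have hdR : dotp a R = 1 := by
          rw [hR, dotp_raypt V a v i hai, ← hd, max_eq_right (le_of_lt hvlt)]
        have hRform : R = V v + ((1 - d) / a i) • (Pi.single i 1 : Fin s → ℝ) := by
          rw [hR, raypt, ← hd, max_eq_right (le_of_lt hδ)]
        set lam' := Function.update lam v (lam v - β) with hlam'def
        set mu' := Function.update mu i (mu i - β * (1 - d) / a i) with hmu'def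
        set θ' := θ + β with hθ'def
        have hθ'pos : 0 < θ' := by simp only [hθ'def]; linarith
        set q₀' := if θ = 0 then R else (θ/θ') • q₀ + (β/θ') • R with hq₀'def
        have hq₀'mem : q₀' ∈ convexHull ℝ (GSet V a) := by
          by_cases h0 : θ = 0
          · rw [hq₀'def, if_pos h0]; exact subset_convexHull ℝ _ hRG
          · rw [hq₀'def, if_neg h0]
            rcases hq₀ with h | ⟨hm, _⟩
            · exact absurd h h0
            · exact (convex_convexHull ℝ (GSet V a)) hm (subset_convexHull ℝ _ hRG)
                (by positivity) (by positivity) (by field_simp; exact hθ'def.symm)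
        have hq₀'dot : dotp a q₀' = 1 := by
          by_cases h0 : θ = 0
          · rw [hq₀'def, if_pos h0]; exact hdR
          · rw [hq₀'def, if_neg h0, dotp_add, dotp_smul, dotp_smul, hdR]
            rcases hq₀ with h | ⟨_, hdq⟩
            · exact absurd h h0
            · rw [hdq]; field_simp; exact hθ'def.symm
        have hθ'q : θ' • q₀' = θ • q₀ + β • R := by
          by_cases h0 : θ = 0
          · rw [hq₀'def, if_pos h0, h0]
            simp [hθ'def, h0]
          · rw [hq₀'def, if_neg h0, smul_add, smul_smul, smul_smul,
              mul_div_cancel₀ _ (ne_of_gt hθ'pos), mul_div_cancel₀ _ (ne_of_gt hθ'pos)]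
        have hlamsum : (∑ x, lam' x • V x) = (∑ x, lam x • V x) - β • V v := by
          rw [hlam'def, sum_update_smul, sub_smul]
          abel
        have hmusum : (∑ j, mu' j • (Pi.single j 1 : Fin s → ℝ))
            = (∑ j, mu j • (Pi.single j 1 : Fin s → ℝ))
              - (β * (1 - d) / a i) • (Pi.single i 1 : Fin s → ℝ) := by
          rw [hmu'def, sum_update_smul, sub_smul]
          abel
        have hy' : y = (∑ x, lam' x • V x) + (∑ j, mu' j • (Pi.single j 1 : Fin s → ℝ))
            + θ' • q₀' := by
          rw [hlamsum, hmusum, hθ'q, hRform, hy, smul_add, smul_smul]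
          have hsc : β * ((1 - d) / a i) = β * (1 - d) / a i := by ring
          rw [hsc]
          abel
        -- measure decrease
        have hc2sub : (univ.filter fun j => mu' j ≠ 0) ⊆ (univ.filter fun j => mu j ≠ 0) := by
          intro x hx
          simp only [mem_filter, mem_univ, true_and] at hx ⊢
          by_cases hxi : x = i
          · subst hxi; exact hi
          · rwa [hmu'def, Function.update_of_ne hxi] at hx
        have hmeas' : meas V a lam' mu' ≤ n := by
          by_cases hcase : lam v ≤ mu i * a i / (1 - d)
          · have hβv : β = lam v := min_eq_left hcase
            have hc1sub : (univ.filter fun x => lam' x ≠ 0 ∧ dotp a (V x) ≠ 1)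
                ⊆ (univ.filter fun x => lam x ≠ 0 ∧ dotp a (V x) ≠ 1).erase v := by
              intro x hx
              simp only [mem_filter, mem_univ, true_and] at hx
              have hxv : x ≠ v := by
                intro hxv; subst hxv
                rw [hlam'def, Function.update_self, hβv, sub_self] at hx
                exact hx.1 rfl
              rw [Finset.mem_erase]
              refine ⟨hxv, ?_⟩
              simp only [mem_filter, mem_univ, true_and]
              rwa [hlam'def, Function.update_of_ne hxv] at hx
            have h1 := Finset.card_le_card hc1sub
            have h2 := Finset.card_le_card hc2sub
            have h3 := Finset.card_erase_of_mem hvfilter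
            have h4 := Finset.card_pos.2 ⟨v, hvfilter⟩
            unfold meas at hmeas ⊢
            omega
          · push_neg at hcase
            have hβv : β = mu i * a i / (1 - d) := min_eq_right (le_of_lt hcase)
            have hifilter : i ∈ univ.filter (fun j => mu j ≠ 0) := by
              simp only [mem_filter, mem_univ, true_and]; exact hi
            have hc2sub' : (univ.filter fun j => mu' j ≠ 0)
                ⊆ (univ.filter fun j => mu j ≠ 0).erase i := by
              intro x hx
              simp only [mem_filter, mem_univ, true_and] at hx
              have hxi : x ≠ i := by
                intro hxi; subst hxi
                rw [hmu'def, Function.update_self, hβv] at hx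
                apply hx
                field_simp; ring
              rw [Finset.mem_erase]
              refine ⟨hxi, ?_⟩
              simp only [mem_filter, mem_univ, true_and]
              rwa [hmu'def, Function.update_of_ne hxi] at hx
            have hc1sub : (univ.filter fun x => lam' x ≠ 0 ∧ dotp a (V x) ≠ 1)
                ⊆ (univ.filter fun x => lam x ≠ 0 ∧ dotp a (V x) ≠ 1) := by
              intro x hx
              simp only [mem_filter, mem_univ, true_and] at hx ⊢
              by_cases hxv : x = v
              · subst hxv; exact ⟨hv0, hx.2⟩
              · rwa [hlam'def, Function.update_of_ne hxv] at hx
            have h1 := Finset.card_le_card hc1sub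
            have h2 := Finset.card_le_card hc2sub'
            have h3 := Finset.card_erase_of_mem hifilter
            have h4 := Finset.card_pos.2 ⟨i, hifilter⟩
            unfold meas at hmeas ⊢
            omega
        refine ih lam' mu' θ' q₀' y hmeas' ?_ ?_ ?_ (le_of_lt hθ'pos) ?_
          (Or.inr ⟨hq₀'mem, hq₀'dot⟩) hy' hay
        · intro x
          by_cases hxv : x = v
          · subst hxv; rw [hlam'def, Function.update_self]; linarith
          · rw [hlam'def, Function.update_of_ne hxv]; exact hlam x
        · intro j
          by_cases hji : j = i
          · subst hji; rw [hmu'def, Function.update_self]; linarith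
          · rw [hmu'def, Function.update_of_ne hji]; exact hmu j
        · intro j hj
          by_cases hji : j = i
          · subst hji; exact hai
          · rw [hmu'def, Function.update_of_ne hji] at hj; exact hmsupp j hj
        · rw [hlam'def, sum_update_real]
          simp only [hθ'def]
          linarith [hsum]
      · -- no ray mass: find a surplus vertex w and merge v with w
        push_neg at hmu0
        have hsurp : ∃ w, lam w ≠ 0 ∧ 1 < dotp a (V w) := by
          by_contra hc
          push_neg at hc
          have hdy : dotp a y = (∑ x, lam x * dotp a (V x)) + θ * dotp a q₀ := by
            rw [hy, dotp_add, dotp_add, dotp_sum_smul, dotp_single_sum, dotp_smul]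
            simp [hmu0]
          have hlt : (∑ x, lam x * dotp a (V x)) < ∑ x, lam x := by
            apply Finset.sum_lt_sum
            · intro x _
              by_cases hx0 : lam x = 0
              · simp [hx0]
              · have := hc x hx0
                nlinarith [lt_of_le_of_ne (hlam x) (Ne.symm hx0)]
            · exact ⟨v, Finset.mem_univ v, by nlinarith⟩
          have hθq : θ * dotp a q₀ ≤ θ := by
            rcases hq₀ with h0 | ⟨_, hdq⟩
            · simp [h0]
            · rw [hdq]; linarith
          rw [hdy] at hay
          linarith
        obtain ⟨w, hw0, hwgt⟩ := hsurp
        have hwpos : 0 < lam w := lt_of_le_of_ne (hlam w) (Ne.symm hw0)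
        have hvw : v ≠ w := fun h => by rw [h] at hvlt; linarith
        set dv := dotp a (V v) with hdv
        set dw := dotp a (V w) with hdw
        have hdwv : 0 < dw - dv := by linarith
        set t := (dw - 1) / (dw - dv) with ht
        have htpos : 0 < t := div_pos (by linarith) hdwv
        have htlt : t < 1 := by
          rw [ht, div_lt_one hdwv]; linarith
        set ρ := min (lam v / t) (lam w / (1 - t)) with hρ
        have hρpos : 0 < ρ := lt_min (div_pos hvpos htpos) (div_pos hwpos (by linarith))
        have hρv : t * ρ ≤ lam v := by
          have := min_le_left (lam v / t) (lam w / (1 - t))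
          calc t * ρ ≤ t * (lam v / t) := by nlinarith
          _ = lam v := by field_simp
        have hρw : (1 - t) * ρ ≤ lam w := by
          have := min_le_right (lam v / t) (lam w / (1 - t))
          have h1t : 0 < 1 - t := by linarith
          calc (1 - t) * ρ ≤ (1 - t) * (lam w / (1 - t)) := by nlinarith
          _ = lam w := by field_simp
        set u := segpt V a v w with hu
        have huG : u ∈ GSet V a := Or.inr (Or.inl ⟨v, w, hvlt, hwgt, rfl⟩)
        have hdu : dotp a u = 1 := dotp_segpt V a v w hvlt hwgt
        have huform : u = t • V v + (1 - t) • V w := by rw [hu, segpt, ← hdv, ← hdw]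
        set lam' := Function.update (Function.update lam v (lam v - t * ρ)) w
          (lam w - (1 - t) * ρ) with hlam'def
        set θ' := θ + ρ with hθ'def
        have hθ'pos : 0 < θ' := by simp only [hθ'def]; linarith
        set q₀' := if θ = 0 then u else (θ/θ') • q₀ + (ρ/θ') • u with hq₀'def
        have hq₀'mem : q₀' ∈ convexHull ℝ (GSet V a) := by
          by_cases h0 : θ = 0
          · rw [hq₀'def, if_pos h0]; exact subset_convexHull ℝ _ huG
          · rw [hq₀'def, if_neg h0]
            rcases hq₀ with h | ⟨hm, _⟩
            · exact absurd h h0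
            · exact (convex_convexHull ℝ (GSet V a)) hm (subset_convexHull ℝ _ huG)
                (by positivity) (by positivity) (by field_simp; exact hθ'def.symm)
        have hq₀'dot : dotp a q₀' = 1 := by
          by_cases h0 : θ = 0
          · rw [hq₀'def, if_pos h0]; exact hdu
          · rw [hq₀'def, if_neg h0, dotp_add, dotp_smul, dotp_smul, hdu]
            rcases hq₀ with h | ⟨_, hdq⟩
            · exact absurd h h0
            · rw [hdq]; field_simp; exact hθ'def.symm
        have hθ'q : θ' • q₀' = θ • q₀ + ρ • u := by
          by_cases h0 : θ = 0
          · rw [hq₀'def, if_pos h0, h0]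
            simp [hθ'def, h0]
          · rw [hq₀'def, if_neg h0, smul_add, smul_smul, smul_smul,
              mul_div_cancel₀ _ (ne_of_gt hθ'pos), mul_div_cancel₀ _ (ne_of_gt hθ'pos)]
        have hupdv : (Function.update lam v (lam v - t * ρ)) w = lam w :=
          Function.update_of_ne (Ne.symm hvw) _ _
        have hlamsum : (∑ x, lam' x • V x)
            = (∑ x, lam x • V x) - (t * ρ) • V v - ((1 - t) * ρ) • V w := by
          rw [hlam'def, sum_update_smul, sum_update_smul, hupdv, sub_smul, sub_smul]
          abel
        have hy' : y = (∑ x, lam' x • V x) + (∑ j, mu j • (Pi.single j 1 : Fin s → ℝ))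
            + θ' • q₀' := by
          rw [hlamsum, hθ'q, huform, hy, smul_add, smul_smul, smul_smul]
          have h1 : ρ * t = t * ρ := by ring
          have h2 : ρ * (1 - t) = (1 - t) * ρ := by ring
          rw [h1, h2]
          abel
        have hmeas' : meas V a lam' mu ≤ n := by
          by_cases hcase : lam v / t ≤ lam w / (1 - t)
          · have hρv' : ρ = lam v / t := min_eq_left hcase
            have hc1sub : (univ.filter fun x => lam' x ≠ 0 ∧ dotp a (V x) ≠ 1)
                ⊆ (univ.filter fun x => lam x ≠ 0 ∧ dotp a (V x) ≠ 1).erase v := by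
              intro x hx
              simp only [mem_filter, mem_univ, true_and] at hx
              have hxv : x ≠ v := by
                intro hxv; subst hxv
                rw [hlam'def, Function.update_of_ne hvw, Function.update_self, hρv'] at hx
                apply hx.1
                field_simp; ring
              rw [Finset.mem_erase]
              refine ⟨hxv, ?_⟩
              simp only [mem_filter, mem_univ, true_and]
              by_cases hxw : x = w
              · subst hxw; exact ⟨hw0, hx.2⟩
              · rwa [hlam'def, Function.update_of_ne hxw, Function.update_of_ne hxv] at hx
            have h1 := Finset.card_le_card hc1sub
            have h3 := Finset.card_erase_of_mem hvfilter
            have h4 := Finset.card_pos.2 ⟨v, hvfilter⟩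
            unfold meas at hmeas ⊢
            omega
          · push_neg at hcase
            have hρw' : ρ = lam w / (1 - t) := min_eq_right (le_of_lt hcase)
            have hwfilter : w ∈ univ.filter (fun x => lam x ≠ 0 ∧ dotp a (V x) ≠ 1) := by
              simp only [mem_filter, mem_univ, true_and]
              exact ⟨hw0, ne_of_gt hwgt⟩
            have hc1sub : (univ.filter fun x => lam' x ≠ 0 ∧ dotp a (V x) ≠ 1)
                ⊆ (univ.filter fun x => lam x ≠ 0 ∧ dotp a (V x) ≠ 1).erase w := by
              intro x hx
              simp only [mem_filter, mem_univ, true_and] at hx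
              have hxw : x ≠ w := by
                intro hxw; subst hxw
                rw [hlam'def, Function.update_self, hρw'] at hx
                apply hx.1
                have h1t : (1 : ℝ) - t ≠ 0 := by linarith
                field_simp; ring
              rw [Finset.mem_erase]
              refine ⟨hxw, ?_⟩
              simp only [mem_filter, mem_univ, true_and]
              by_cases hxv : x = v
              · subst hxv; exact ⟨hv0, hx.2⟩
              · rwa [hlam'def, Function.update_of_ne hxw, Function.update_of_ne hxv] at hx
            have h1 := Finset.card_le_card hc1sub
            have h3 := Finset.card_erase_of_mem hwfilter
            have h4 := Finset.card_pos.2 ⟨w, hwfilter⟩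
            unfold meas at hmeas ⊢
            omega
        refine ih lam' mu θ' q₀' y hmeas' ?_ hmu hmsupp (le_of_lt hθ'pos) ?_
          (Or.inr ⟨hq₀'mem, hq₀'dot⟩) hy' hay
        · intro x
          by_cases hxw : x = w
          · subst hxw; rw [hlam'def, Function.update_self]; linarith
          · by_cases hxv : x = v
            · subst hxv
              rw [hlam'def, Function.update_of_ne hvw, Function.update_self]; linarith
            · rw [hlam'def, Function.update_of_ne hxw, Function.update_of_ne hxv]
              exact hlam x
        · rw [hlam'def, sum_update_real, sum_update_real, hupdv]
          simp only [hθ'def]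
          linarith [hsum]
    · push_neg at hdef
      subst hy
      exact core_done V a lam mu θ q₀ hlam hmu hθ hsum (hq₀.imp id And.left) hdef

/-- The "generated" (blocking-type) set. -/
def Gen {r : ℕ} (α : Fin r → Fin s → ℚ) : Set (Fin s → ℝ) :=
  {x | ∃ p ∈ convexHull ℝ (Set.range fun j => fun i => ((α j i : ℝ))),
    ∃ z : Fin s → ℝ, (∀ i, 0 ≤ z i) ∧ x = z + p}

lemma orthant_convex : Convex ℝ {x : Fin s → ℝ | ∀ i, 0 ≤ x i} := by
  intro x hx y hy a b ha hb hab
  intro i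
  have := hx i
  have := hy i
  simp only [Pi.add_apply, Pi.smul_apply, smul_eq_mul]
  nlinarith

lemma gen_upward {r : ℕ} (α : Fin r → Fin s → ℚ) {x y : Fin s → ℝ}
    (hx : x ∈ Gen α) (hxy : ∀ i, x i ≤ y i) : y ∈ Gen α := by
  obtain ⟨p, hp, z, hz, hxe⟩ := hx
  refine ⟨p, hp, z + (y - x), fun i => ?_, ?_⟩
  · simp only [Pi.add_apply, Pi.sub_apply]
    have := hz i; have := hxy i; linarith
  · funext i
    have hxi : x i = z i + p i := by rw [hxe]; rfl
    simp only [Pi.add_apply, Pi.sub_apply]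
    rw [hxi]; ring

lemma gen_eq_add {r : ℕ} (α : Fin r → Fin s → ℚ) :
    Gen α = {z : Fin s → ℝ | ∀ i, 0 ≤ z i}
      + convexHull ℝ (Set.range fun j => fun i => ((α j i : ℝ))) := by
  ext x
  simp only [Gen, Set.mem_setOf_eq, Set.mem_add]
  constructor
  · rintro ⟨p, hp, z, hz, rfl⟩
    exact ⟨z, hz, p, hp, rfl⟩
  · rintro ⟨z, hz, p, hp, rfl⟩
    exact ⟨p, hp, z, hz, rfl⟩

lemma gen_convex {r : ℕ} (α : Fin r → Fin s → ℚ) : Convex ℝ (Gen α) := by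
  rw [gen_eq_add]
  exact Convex.add orthant_convex (convex_convexHull ℝ _)

lemma gen_nonneg {r : ℕ} (α : Fin r → Fin s → ℚ) (hα : ∀ j i, 0 ≤ α j i) {x : Fin s → ℝ}
    (hx : x ∈ Gen α) : ∀ i, 0 ≤ x i := by
  obtain ⟨p, hp, z, hz, rfl⟩ := hx
  have hsub : convexHull ℝ (Set.range fun j => fun i => ((α j i : ℝ)))
      ⊆ {x : Fin s → ℝ | ∀ i, 0 ≤ x i} := by
    apply convexHull_min _ orthant_convex
    rintro _ ⟨j, rfl⟩ i
    exact Rat.cast_nonneg.mpr (hα j i)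
  intro i
  have := hsub hp i
  have := hz i
  simp only [Pi.add_apply]
  linarith

/-- weights for a point of the hull of a finite range -/
lemma exists_weights {r : ℕ} (V : Fin r → Fin s → ℝ) {p : Fin s → ℝ}
    (hp : p ∈ convexHull ℝ (Set.range V)) :
    ∃ lam : Fin r → ℝ, (∀ v, 0 ≤ lam v) ∧ (∑ v, lam v) = 1 ∧ (∑ v, lam v • V v) = p := by
  classical
  rw [mem_convexHull_iff_exists_fintype] at hp
  obtain ⟨ι, hι, w, z, hw0, hw1, hz, hx⟩ := hp
  choose g hg using hz
  refine ⟨fun v => ∑ i ∈ univ.filter (fun i => g i = v), w i, ?_, ?_, ?_⟩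
  · intro v
    exact Finset.sum_nonneg (fun i _ => hw0 i)
  · rw [Finset.sum_fiberwise univ g w]
    exact hw1
  · rw [← hx]
    rw [← Finset.sum_fiberwise univ g (fun i => w i • z i)]
    refine Finset.sum_congr rfl (fun v _ => ?_)
    rw [Finset.sum_smul]
    refine Finset.sum_congr rfl (fun i hi => ?_)
    simp only [mem_filter, mem_univ, true_and] at hi
    rw [← hi, hg]


/-! ### The halfspace intersection step -/

lemma halfspace_convex (a : Fin s → ℝ) : Convex ℝ {x : Fin s → ℝ | 1 ≤ dotp a x} := by
  intro x hx y hy c d hc hd hcd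
  simp only [Set.mem_setOf_eq] at *
  rw [dotp_add, dotp_smul, dotp_smul]
  nlinarith

lemma gen_step {r : ℕ} (α : Fin r → Fin s → ℚ) (hα : ∀ j i, 0 ≤ α j i)
    (a : Fin s → ℚ) (ha : ∀ i, 0 ≤ a i) :
    ∃ (r' : ℕ) (α' : Fin r' → Fin s → ℚ), (∀ j i, 0 ≤ α' j i) ∧
      Gen α' = Gen α ∩ {x | 1 ≤ ∑ i, (a i : ℝ) * x i} := by
  classical
  by_cases hall : ∀ i, a i = 0
  · refine ⟨0, fun j i => 0, fun j i => le_refl 0, ?_⟩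
    have hempty : Gen (fun (j : Fin 0) (i : Fin s) => (0:ℚ)) = (∅ : Set (Fin s → ℝ)) := by
      ext x
      simp only [Gen, Set.mem_setOf_eq, Set.mem_empty_iff_false, iff_false]
      rintro ⟨p, hp, _⟩
      rw [Set.range_eq_empty _, convexHull_empty] at hp
      exact hp
    rw [hempty]
    ext x
    simp only [Set.mem_empty_iff_false, Set.mem_inter_iff, false_iff]
    rintro ⟨-, hx⟩
    simp only [Set.mem_setOf_eq] at hx
    have : (∑ i, (a i : ℝ) * x i) = 0 := by
      apply Finset.sum_eq_zero
      intro i _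
      rw [hall i]
      simp
    rw [this] at hx
    linarith
  · push_neg at hall
    obtain ⟨i₀, hi₀'⟩ := hall
    have hi₀ : 0 < a i₀ := lt_of_le_of_ne (ha i₀) (Ne.symm hi₀')
    -- real versions
    set aR : Fin s → ℝ := fun i => (a i : ℝ) with haR
    set VR : Fin r → Fin s → ℝ := fun v i => (α v i : ℝ) with hVR
    have haR0 : ∀ i, 0 ≤ aR i := fun i => Rat.cast_nonneg.mpr (ha i)
    -- rational dot products
    set dq : Fin r → ℚ := fun v => ∑ i, a i * α v i with hdqdef
    have hdq : ∀ v, ((dq v : ℝ)) = dotp aR (VR v) := by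
      intro v
      rw [hdqdef]
      push_cast
      rfl
    -- rational generator candidates
    set rayQ : Fin r → Fin s → Fin s → ℚ := fun v i =>
      α v + (max 0 (1 - dq v) / a i) • (Pi.single i 1 : Fin s → ℚ) with hrayQ
    set segQ : Fin r → Fin r → Fin s → ℚ := fun v w =>
      ((dq w - 1) / (dq w - dq v)) • α v + (1 - (dq w - 1) / (dq w - dq v)) • α w with hsegQ
    have hcast_ray : ∀ v i, (fun j => ((rayQ v i j : ℝ))) = raypt VR aR v i := by
      intro v i
      funext j
      rw [hrayQ, raypt, ← hdq]
      simp only [Pi.add_apply, Pi.smul_apply, smul_eq_mul]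
      push_cast [Rat.cast_max, Pi.single_apply]
      by_cases hji : j = i <;> simp [hji, hVR, haR]
    have hcast_seg : ∀ v w, (fun j => ((segQ v w j : ℝ))) = segpt VR aR v w := by
      intro v w
      funext j
      rw [hsegQ, segpt, ← hdq, ← hdq]
      simp only [Pi.add_apply, Pi.smul_apply, smul_eq_mul]
      push_cast
      ring
    -- index type for the new generators
    set I := (Fin r ⊕ (Fin r × Fin r) ⊕ (Fin r × Fin s)) with hI
    set e := Fintype.equivFin I with he
    set F : I → Fin s → ℚ := fun x =>
      Sum.elim (fun v => if 1 ≤ dq v then α v else rayQ v i₀)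
        (Sum.elim (fun vw => if dq vw.1 < 1 ∧ 1 < dq vw.2 then segQ vw.1 vw.2
            else rayQ vw.1 i₀)
          (fun vi => if 0 < a vi.2 then rayQ vi.1 vi.2 else rayQ vi.1 i₀)) x with hF
    -- nonnegativity of candidate generators
    have hrayQ0 : ∀ v i j, 0 ≤ rayQ v i j := by
      intro v i j
      rw [hrayQ]
      simp only [Pi.add_apply, Pi.smul_apply, smul_eq_mul]
      have h1 : (0:ℚ) ≤ max 0 (1 - dq v) / a i := div_nonneg (le_max_left _ _) (ha i)
      have h2 : (0:ℚ) ≤ (Pi.single i 1 : Fin s → ℚ) j := by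
        rw [Pi.single_apply]; split <;> norm_num
      exact add_nonneg (hα v j) (mul_nonneg h1 h2)
    have hsegQ0 : ∀ v w, dq v < 1 → 1 < dq w → ∀ j, 0 ≤ segQ v w j := by
      intro v w hv hw j
      rw [hsegQ]
      simp only [Pi.add_apply, Pi.smul_apply, smul_eq_mul]
      have hd : 0 < dq w - dq v := by linarith
      have ht0 : 0 ≤ (dq w - 1)/(dq w - dq v) := div_nonneg (by linarith) (le_of_lt hd)
      have ht1 : (dq w - 1)/(dq w - dq v) ≤ 1 := by rw [div_le_one hd]; linarith
      have h1 := hα v j; have h2 := hα w j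
      nlinarith
    have hF0 : ∀ x j, 0 ≤ F x j := by
      rintro (v | vw | vi) j <;> rw [hF]
      · simp only [Sum.elim_inl]
        split
        · exact hα v j
        · exact hrayQ0 v i₀ j
      · simp only [Sum.elim_inr, Sum.elim_inl]
        split
        · next h => exact hsegQ0 vw.1 vw.2 h.1 h.2 j
        · exact hrayQ0 vw.1 i₀ j
      · simp only [Sum.elim_inr]
        split
        · exact hrayQ0 vi.1 vi.2 j
        · exact hrayQ0 vi.1 i₀ j
    -- membership of the candidate generators in the intersection
    have hhalfeq : {x : Fin s → ℝ | 1 ≤ ∑ i, (a i : ℝ) * x i} = {x | 1 ≤ dotp aR x} := rfl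
    have hvertmem : ∀ v, 1 ≤ dotp aR (VR v) → VR v ∈ Gen α ∩ {x | 1 ≤ dotp aR x} := by
      intro v hv
      refine ⟨⟨VR v, subset_convexHull ℝ _ ⟨v, rfl⟩, 0, fun i => le_refl 0,
        (zero_add _).symm⟩, hv⟩
    have hraymem : ∀ v i, 0 < aR i →
        raypt VR aR v i ∈ Gen α ∩ {x | 1 ≤ dotp aR x} := by
      intro v i hai
      constructor
      · refine ⟨VR v, subset_convexHull ℝ _ ⟨v, rfl⟩,
          (max 0 (1 - dotp aR (VR v)) / aR i) • (Pi.single i 1 : Fin s → ℝ), ?_, ?_⟩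
        · intro j
          have hc : (0:ℝ) ≤ max 0 (1 - dotp aR (VR v)) / aR i :=
            div_nonneg (le_max_left _ _) (le_of_lt hai)
          simp only [Pi.smul_apply, smul_eq_mul, Pi.single_apply]
          split <;> nlinarith
        · rw [raypt, add_comm]
      · show 1 ≤ dotp aR (raypt VR aR v i)
        rw [dotp_raypt VR aR v i hai]
        exact le_max_right _ _
    have hsegmem : ∀ v w, dotp aR (VR v) < 1 → 1 < dotp aR (VR w) →
        segpt VR aR v w ∈ Gen α ∩ {x | 1 ≤ dotp aR x} := by
      intro v w hv hw
      constructor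
      · refine ⟨segpt VR aR v w, ?_, 0, fun i => le_refl 0, (zero_add _).symm⟩
        have h1 : 0 < dotp aR (VR w) - dotp aR (VR v) := by linarith
        have ht0 : 0 ≤ (dotp aR (VR w) - 1)/(dotp aR (VR w) - dotp aR (VR v)) :=
          div_nonneg (by linarith) (le_of_lt h1)
        have ht1 : (dotp aR (VR w) - 1)/(dotp aR (VR w) - dotp aR (VR v)) ≤ 1 := by
          rw [div_le_one h1]; linarith
        rw [segpt]
        refine (convex_convexHull ℝ _) ?_ ?_ ht0 (by linarith) (by ring)
        · exact subset_convexHull ℝ _ ⟨v, rfl⟩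
        · exact subset_convexHull ℝ _ ⟨w, rfl⟩
      · show 1 ≤ dotp aR (segpt VR aR v w)
        rw [dotp_segpt VR aR v w hv hw]
    have hi₀R : 0 < aR i₀ := by
      show (0:ℝ) < ((a i₀ : ℚ) : ℝ)
      exact_mod_cast hi₀
    have hFmem : ∀ x, (fun j => ((F x j : ℝ))) ∈ Gen α ∩ {x | 1 ≤ dotp aR x} := by
      rintro (v | vw | vi)
      · by_cases h : 1 ≤ dq v
        · rw [hF]
          simp only [Sum.elim_inl, if_pos h]
          have h' : 1 ≤ dotp aR (VR v) := by rw [← hdq]; exact_mod_cast h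
          exact hvertmem v h'
        · rw [hF]
          simp only [Sum.elim_inl, if_neg h]
          rw [hcast_ray]
          exact hraymem v i₀ hi₀R
      · by_cases h : dq vw.1 < 1 ∧ 1 < dq vw.2
        · rw [hF]
          simp only [Sum.elim_inr, Sum.elim_inl, if_pos h]
          rw [hcast_seg]
          refine hsegmem vw.1 vw.2 ?_ ?_
          · rw [← hdq]; exact_mod_cast h.1
          · rw [← hdq]; exact_mod_cast h.2
        · rw [hF]
          simp only [Sum.elim_inr, Sum.elim_inl, if_neg h]
          rw [hcast_ray]
          exact hraymem vw.1 i₀ hi₀R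
      · by_cases h : 0 < a vi.2
        · rw [hF]
          simp only [Sum.elim_inr, if_pos h]
          rw [hcast_ray]
          refine hraymem vi.1 vi.2 ?_
          show (0:ℝ) < ((a vi.2 : ℚ) : ℝ)
          exact_mod_cast h
        · rw [hF]
          simp only [Sum.elim_inr, if_neg h]
          rw [hcast_ray]
          exact hraymem vi.1 i₀ hi₀R
    -- the generator set of the core lemma is covered
    have hGsub : GSet VR aR ⊆ Set.range (fun x => (fun j => ((F x j : ℝ)))) := by
      rintro p (⟨v, hv, rfl⟩ | ⟨v, w, hv, hw, rfl⟩ | ⟨v, i, hv, hi, rfl⟩)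
      · refine ⟨Sum.inl v, ?_⟩
        have h : 1 ≤ dq v := by
          rw [← Rat.cast_le (K := ℝ), hdq]
          exact_mod_cast hv
        rw [hF]
        simp only [Sum.elim_inl, if_pos h]
        rfl
      · refine ⟨Sum.inr (Sum.inl (v, w)), ?_⟩
        have h1 : dq v < 1 := by
          rw [← Rat.cast_lt (K := ℝ), hdq]
          exact_mod_cast hv
        have h2 : 1 < dq w := by
          rw [← Rat.cast_lt (K := ℝ), hdq]
          exact_mod_cast hw
        rw [hF]
        simp only [Sum.elim_inr, Sum.elim_inl, if_pos (And.intro h1 h2)]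
        exact hcast_seg v w
      · refine ⟨Sum.inr (Sum.inr (v, i)), ?_⟩
        have h : 0 < a i := by
          have h' := hi
          simp only [haR] at h'
          exact_mod_cast h'
        rw [hF]
        simp only [Sum.elim_inr, if_pos h]
        exact hcast_ray v i
    -- enumerate the new generators by a Fin type
    refine ⟨Fintype.card I, fun j => F (e.symm j), fun j i => hF0 _ i, ?_⟩
    have hrangeeq : (Set.range fun (j : Fin (Fintype.card I)) => fun i => ((F (e.symm j) i : ℝ)))
        = Set.range (fun x : I => (fun j => ((F x j : ℝ)))) := by
      ext y
      constructor
      · rintro ⟨j, rfl⟩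
        exact ⟨e.symm j, rfl⟩
      · rintro ⟨xI, rfl⟩
        exact ⟨e xI, by simp⟩
    ext x
    constructor
    · rintro ⟨p, hp, z, hz, rfl⟩
      rw [hrangeeq] at hp
      have hpmem : p ∈ Gen α ∩ {x | 1 ≤ dotp aR x} := by
        refine convexHull_min ?_ ?_ hp
        · rintro _ ⟨xI, rfl⟩
          exact hFmem xI
        · exact Convex.inter (gen_convex α) (halfspace_convex aR)
      constructor
      · exact gen_upward α hpmem.1 (fun i => by
          simp only [Pi.add_apply]
          linarith [hz i])
      · rw [hhalfeq]
        show 1 ≤ dotp aR (z + p)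
        rw [dotp_add]
        have hz0 : 0 ≤ dotp aR z :=
          Finset.sum_nonneg (fun i _ => mul_nonneg (haR0 i) (hz i))
        have := hpmem.2
        simp only [Set.mem_setOf_eq] at this
        linarith
    · rintro ⟨⟨p, hp, z, hz, rfl⟩, hx1⟩
      rw [hhalfeq] at hx1
      simp only [Set.mem_setOf_eq] at hx1
      obtain ⟨lam, hlam0, hlamsum, hlamval⟩ := exists_weights VR hp
      have hfin : ∀ q, q ∈ convexHull ℝ (GSet VR aR) → (∀ j, q j ≤ (z + p) j) →
          (z + p) ∈ {x | ∃ p ∈ convexHull ℝ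
              (Set.range fun (j : Fin (Fintype.card I)) => fun i => ((F (e.symm j) i : ℝ))),
            ∃ zz : Fin s → ℝ, (∀ i, 0 ≤ zz i) ∧ x = zz + p} := by
        intro q hq hle
        refine ⟨q, ?_, fun j => (z + p) j - q j, fun j => by
          show (0:ℝ) ≤ (z + p) j - q j
          linarith [hle j], ?_⟩
        · rw [hrangeeq]
          exact convexHull_mono hGsub hq
        · funext j
          simp only [Pi.add_apply]
          ring
      by_cases hp1 : 1 ≤ dotp aR p
      · obtain ⟨q, hqhull, hqle⟩ := core_main VR aR (meas VR aR lam (fun _ => 0)) lam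
          (fun _ => 0) 0 0 p (le_refl _) hlam0 (fun i => le_refl 0)
          (fun i hi => absurd rfl hi) (le_refl 0) (by rw [add_zero]; exact hlamsum)
          (Or.inl rfl)
          (by simp only [zero_smul, Finset.sum_const_zero, smul_zero, add_zero]
              exact hlamval.symm)
          hp1
        refine hfin q hqhull (fun j => ?_)
        have := hqle j
        have hzj := hz j
        simp only [Pi.add_apply]
        linarith
      · push_neg at hp1
        have hdx : dotp aR (z + p) = dotp aR z + dotp aR p := dotp_add aR z p
        set T := ∑ i, (if 0 < aR i then aR i * z i else 0) with hT
        have hTd : T = dotp aR z := by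
          rw [hT]
          refine Finset.sum_congr rfl (fun i _ => ?_)
          by_cases hia : 0 < aR i
          · rw [if_pos hia]
          · rw [if_neg hia]
            have : aR i = 0 := le_antisymm (not_lt.1 hia) (haR0 i)
            rw [this, zero_mul]
        have hTpos : 0 < T := by
          rw [hTd]
          rw [hdx] at hx1
          linarith
        set c := (1 - dotp aR p)/T with hc
        have hc0 : 0 < c := div_pos (by linarith) hTpos
        have hc1 : c ≤ 1 := by
          rw [hc, div_le_one hTpos, hTd]
          rw [hdx] at hx1
          linarith
        set mu := fun i => if 0 < aR i then c * z i else 0 with hmu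
        set y := (∑ v, lam v • VR v) + (∑ i, mu i • (Pi.single i 1 : Fin s → ℝ))
          + (0:ℝ) • (0 : Fin s → ℝ) with hydef
        have hdsum : (∑ i, aR i * mu i) = c * T := by
          rw [hT, Finset.mul_sum]
          refine Finset.sum_congr rfl (fun i _ => ?_)
          simp only [hmu]
          by_cases hia : 0 < aR i
          · rw [if_pos hia, if_pos hia]; ring
          · rw [if_neg hia, if_neg hia]; ring
        have hdy : dotp aR y = dotp aR p + c * T := by
          rw [hydef, dotp_add, dotp_add, dotp_single_sum, hlamval, hdsum, dotp_smul]
          have : dotp aR (0 : Fin s → ℝ) = 0 := by simp [dotp]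
          rw [this]
          ring
        have h1y : 1 ≤ dotp aR y := by
          rw [hdy, hc, div_mul_cancel₀ _ (ne_of_gt hTpos)]
          linarith
        obtain ⟨q, hqhull, hqle⟩ := core_main VR aR (meas VR aR lam mu) lam mu 0 0 y
          (le_refl _) hlam0
          (fun i => by
            simp only [hmu]
            by_cases hia : 0 < aR i
            · rw [if_pos hia]
              exact mul_nonneg (le_of_lt hc0) (hz i)
            · rw [if_neg hia])
          (fun i hi => by
            simp only [hmu] at hi
            by_cases hia : 0 < aR i
            · exact hia
            · rw [if_neg hia] at hi
              exact absurd rfl hi)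
          (le_refl 0) (by rw [add_zero]; exact hlamsum) (Or.inl rfl) hydef h1y
        refine hfin q hqhull (fun j => ?_)
        have h1 := hqle j
        have h2 : y j ≤ (z + p) j := by
          rw [hydef]
          simp only [Pi.add_apply, Pi.smul_apply, smul_eq_mul, zero_smul, Pi.zero_apply]
          rw [single_sum_apply]
          have hpj : (∑ v, lam v • VR v) j = p j := by rw [hlamval]
          rw [hpj]
          have hmuz : mu j ≤ z j := by
            simp only [hmu]
            by_cases hia : 0 < aR j
            · rw [if_pos hia]
              nlinarith [hz j]
            · rw [if_neg hia]
              exact hz j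
          simp only [mul_zero, add_zero]
          linarith
        linarith



/-! ### From constraint form to generated form -/

lemma gen_exists : ∀ (k : ℕ) (A : Fin k → Fin s → ℚ) (b : Fin k → ℚ), (∀ j i, 0 ≤ A j i) →
    ∃ (r : ℕ) (α : Fin r → Fin s → ℚ), (∀ j i, 0 ≤ α j i) ∧
      {x : Fin s → ℝ | (∀ i, 0 ≤ x i) ∧ ∀ j, (b j : ℝ) ≤ ∑ i, (A j i : ℝ) * x i} = Gen α := by
  intro k
  induction k with
  | zero =>
    intro A b hA
    refine ⟨1, fun _ _ => 0, fun _ _ => le_refl 0, ?_⟩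
    ext x
    simp only [Set.mem_setOf_eq]
    constructor
    · rintro ⟨hx, -⟩
      refine ⟨fun i => ((0:ℚ):ℝ), subset_convexHull ℝ _ ⟨0, rfl⟩, x, hx, ?_⟩
      funext j
      simp
    · rintro ⟨p, hp, z, hz, rfl⟩
      exact ⟨gen_nonneg _ (fun _ _ => le_refl 0) ⟨p, hp, z, hz, rfl⟩, fun j => Fin.elim0 j⟩
  | succ k ih =>
    intro A b hA
    obtain ⟨r, α, hα, hGen⟩ := ih (fun j => A j.succ) (fun j => b j.succ)
      (fun j i => hA j.succ i)
    have hsplit : {x : Fin s → ℝ | (∀ i, 0 ≤ x i) ∧ ∀ j, (b j : ℝ) ≤ ∑ i, (A j i : ℝ) * x i}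
        = {x : Fin s → ℝ | (∀ i, 0 ≤ x i) ∧
              ∀ j : Fin k, ((b j.succ : ℝ)) ≤ ∑ i, (A j.succ i : ℝ) * x i}
          ∩ {x | (b 0 : ℝ) ≤ ∑ i, (A 0 i : ℝ) * x i} := by
      ext x
      simp only [Set.mem_setOf_eq, Set.mem_inter_iff]
      constructor
      · rintro ⟨h1, h2⟩
        exact ⟨⟨h1, fun j => h2 j.succ⟩, h2 0⟩
      · rintro ⟨⟨h1, h2⟩, h3⟩
        exact ⟨h1, fun j => Fin.cases h3 h2 j⟩
    by_cases hb : b 0 ≤ 0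
    · refine ⟨r, α, hα, ?_⟩
      rw [hsplit, hGen, Set.inter_eq_left.2 ?_]
      intro x hx
      have hx0 := gen_nonneg α hα hx
      have hs : (0:ℝ) ≤ ∑ i, (A 0 i:ℝ) * x i :=
        Finset.sum_nonneg (fun i _ => mul_nonneg (Rat.cast_nonneg.mpr (hA 0 i)) (hx0 i))
      have hb' : ((b 0 : ℚ):ℝ) ≤ 0 := by exact_mod_cast hb
      simp only [Set.mem_setOf_eq]
      linarith
    · push_neg at hb
      obtain ⟨r', α', hα', hstep⟩ := gen_step α hα (fun i => A 0 i / b 0)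
        (fun i => div_nonneg (hA 0 i) (le_of_lt hb))
      refine ⟨r', α', hα', ?_⟩
      rw [hsplit, hGen, hstep]
      congr 1
      ext x
      simp only [Set.mem_setOf_eq]
      have hb0 : (0:ℝ) < (b 0 : ℝ) := by exact_mod_cast hb
      have hsum : ∑ i, ((A 0 i / b 0 : ℚ) : ℝ) * x i = (∑ i, (A 0 i:ℝ) * x i) / (b 0:ℝ) := by
        rw [Finset.sum_div]
        refine Finset.sum_congr rfl (fun i _ => ?_)
        push_cast
        ring
      rw [hsum, one_le_div hb0]

/-- If a nonempty upward closed set is cut out by rational inequalities then the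
coefficients are automatically nonnegative. -/
lemma A_nonneg {k : ℕ} (A : Fin k → Fin s → ℚ) (b : Fin k → ℚ)
    (hup : ∀ x ∈ {x : Fin s → ℝ | ∀ j, (b j : ℝ) ≤ ∑ i, (A j i : ℝ) * x i},
      ∀ y : Fin s → ℝ, (∀ i, x i ≤ y i) →
        y ∈ {x : Fin s → ℝ | ∀ j, (b j:ℝ) ≤ ∑ i, (A j i:ℝ) * x i})
    (x₀ : Fin s → ℝ) (hx₀ : ∀ j, (b j : ℝ) ≤ ∑ i, (A j i:ℝ) * x₀ i) :
    ∀ j i, 0 ≤ A j i := by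
  intro j i
  by_contra hneg
  push_neg at hneg
  have hnegR : ((A j i : ℚ):ℝ) < 0 := by exact_mod_cast hneg
  have hx₀j : (b j : ℝ) ≤ dotp (fun i' => (A j i' : ℝ)) x₀ := hx₀ j
  set t : ℝ := ((∑ i', (A j i':ℝ) * x₀ i') - (b j:ℝ) + 1) / (-(A j i : ℝ)) with ht
  have htpos : 0 < t := div_pos (by
      have := hx₀ j
      linarith) (by linarith)
  set y := x₀ + t • (Pi.single i 1 : Fin s → ℝ) with hy
  have hxy : ∀ i', x₀ i' ≤ y i' := by
    intro i'
    rw [hy]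
    simp only [Pi.add_apply, Pi.smul_apply, smul_eq_mul, Pi.single_apply]
    split <;> nlinarith
  have hyQ : (b j : ℝ) ≤ ∑ i', (A j i':ℝ) * y i' := hup x₀ hx₀ y hxy j
  have hcomp : dotp (fun i' => (A j i':ℝ)) y
      = dotp (fun i' => (A j i':ℝ)) x₀ + t * (A j i:ℝ) := by
    rw [hy, dotp_add, dotp_smul, dotp_single]
  have hyQ' : (b j : ℝ) ≤ dotp (fun i' => (A j i':ℝ)) y := hyQ
  rw [hcomp] at hyQ'
  have hA0 : -(A j i : ℝ) ≠ 0 := by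
    intro h
    rw [neg_eq_zero] at h
    rw [h] at hnegR
    exact lt_irrefl 0 hnegR
  have hmul : t * (A j i:ℝ) = -((∑ i', (A j i':ℝ) * x₀ i') - (b j:ℝ) + 1) := by
    rw [ht, div_mul_eq_mul_div, div_eq_iff hA0]
    ring
  have hdotx : dotp (fun i' => (A j i':ℝ)) x₀ = ∑ i', (A j i':ℝ) * x₀ i' := rfl
  rw [hdotx, hmul] at hyQ'
  linarith


end Blk

/-- A rational polyhedron in `ℝ^s`: a finite intersection of rational closed halfspaces. -/
def IsRationalPolyhedron {s : ℕ} (Q : Set (Fin s → ℝ)) : Prop :=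
  ∃ (k : ℕ) (A : Fin k → Fin s → ℚ) (b : Fin k → ℚ),
    Q = {x | ∀ j, (b j : ℝ) ≤ ∑ i, (A j i : ℝ) * x i}

open Blk Finset

/-- Characterization of rational polyhedra of blocking (covering) type:
(a) `Q ⊆ ℝ_+^s` and upward closed; (b) `Q = ℝ_+^s + conv(α_1,...,α_r)` with the `α_i`
non-negative rational; (c) `Q = {x : x ≥ 0, xD ≥ 1}` for a non-negative rational matrix `D`. -/
theorem stmt8 {s : ℕ} (Q : Set (Fin s → ℝ)) (hQ : IsRationalPolyhedron Q) :
    ((Q ⊆ {x | ∀ i, 0 ≤ x i} ∧ ∀ x ∈ Q, ∀ y : Fin s → ℝ, (∀ i, x i ≤ y i) → y ∈ Q) ↔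
      (∃ (r : ℕ) (α : Fin r → Fin s → ℚ), (∀ j i, 0 ≤ α j i) ∧
        Q = {x | ∃ p ∈ convexHull ℝ (Set.range fun j => fun i => ((α j i : ℝ))),
          ∃ z : Fin s → ℝ, (∀ i, 0 ≤ z i) ∧ x = z + p})) ∧
    ((∃ (r : ℕ) (α : Fin r → Fin s → ℚ), (∀ j i, 0 ≤ α j i) ∧
        Q = {x | ∃ p ∈ convexHull ℝ (Set.range fun j => fun i => ((α j i : ℝ))),
          ∃ z : Fin s → ℝ, (∀ i, 0 ≤ z i) ∧ x = z + p}) ↔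
      (∃ (m : ℕ) (D : Matrix (Fin s) (Fin m) ℚ), (∀ i j, 0 ≤ D i j) ∧
        Q = {x | (∀ i, 0 ≤ x i) ∧ ∀ j, (1 : ℝ) ≤ ∑ i, x i * (D i j : ℝ)})) := by
  classical
  obtain ⟨k, A, b, hQdef⟩ := hQ
  -- (b) → (a)
  have btoa : (∃ (r : ℕ) (α : Fin r → Fin s → ℚ), (∀ j i, 0 ≤ α j i) ∧
      Q = {x | ∃ p ∈ convexHull ℝ (Set.range fun j => fun i => ((α j i : ℝ))),
        ∃ z : Fin s → ℝ, (∀ i, 0 ≤ z i) ∧ x = z + p}) →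
      (Q ⊆ {x | ∀ i, 0 ≤ x i} ∧ ∀ x ∈ Q, ∀ y : Fin s → ℝ, (∀ i, x i ≤ y i) → y ∈ Q) := by
    rintro ⟨r, α, hα, hQb⟩
    constructor
    · intro x hx
      rw [hQb] at hx
      exact gen_nonneg α hα hx
    · intro x hx y hxy
      rw [hQb] at hx ⊢
      exact gen_upward α hx hxy
  -- (a) → (b)
  have atob : (Q ⊆ {x | ∀ i, 0 ≤ x i}) →
      (∀ x ∈ Q, ∀ y : Fin s → ℝ, (∀ i, x i ≤ y i) → y ∈ Q) →
      (∃ (r : ℕ) (α : Fin r → Fin s → ℚ), (∀ j i, 0 ≤ α j i) ∧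
        Q = {x | ∃ p ∈ convexHull ℝ (Set.range fun j => fun i => ((α j i : ℝ))),
          ∃ z : Fin s → ℝ, (∀ i, 0 ≤ z i) ∧ x = z + p}) := by
    intro h1 h2
    by_cases hne : Q.Nonempty
    · obtain ⟨x₀, hx₀⟩ := hne
      rw [hQdef] at h1 h2
      have hx₀' : ∀ j, (b j:ℝ) ≤ ∑ i, (A j i:ℝ) * x₀ i := by
        rw [hQdef] at hx₀
        exact hx₀
      have hA := A_nonneg A b h2 x₀ hx₀'
      obtain ⟨r, α, hα, heq⟩ := gen_exists k A b hA
      refine ⟨r, α, hα, ?_⟩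
      rw [hQdef]
      have hQset : {x : Fin s → ℝ | ∀ j, (b j:ℝ) ≤ ∑ i, (A j i:ℝ) * x i}
          = {x : Fin s → ℝ | (∀ i, 0 ≤ x i) ∧ ∀ j, (b j:ℝ) ≤ ∑ i, (A j i:ℝ) * x i} := by
        ext x
        simp only [Set.mem_setOf_eq]
        exact ⟨fun hx => ⟨h1 hx, hx⟩, fun hx => hx.2⟩
      rw [hQset, heq]
      rfl
    · have hQe : Q = ∅ := Set.not_nonempty_iff_eq_empty.1 hne
      refine ⟨0, fun j i => 0, fun j i => le_refl 0, ?_⟩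
      rw [hQe]
      ext x
      simp only [Set.mem_empty_iff_false, false_iff, Set.mem_setOf_eq]
      rintro ⟨p, hp, -⟩
      rw [Set.range_eq_empty _, convexHull_empty] at hp
      exact hp
  -- (c) → (a)
  have ctoa : (∃ (m : ℕ) (D : Matrix (Fin s) (Fin m) ℚ), (∀ i j, 0 ≤ D i j) ∧
      Q = {x | (∀ i, 0 ≤ x i) ∧ ∀ j, (1 : ℝ) ≤ ∑ i, x i * (D i j : ℝ)}) →
      (Q ⊆ {x | ∀ i, 0 ≤ x i} ∧ ∀ x ∈ Q, ∀ y : Fin s → ℝ, (∀ i, x i ≤ y i) → y ∈ Q) := by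
    rintro ⟨m, D, hD, hQc⟩
    constructor
    · intro x hx
      rw [hQc] at hx
      exact hx.1
    · intro x hx y hxy
      rw [hQc] at hx ⊢
      refine ⟨fun i => le_trans (hx.1 i) (hxy i), fun j => ?_⟩
      refine le_trans (hx.2 j) (Finset.sum_le_sum (fun i _ => ?_))
      exact mul_le_mul_of_nonneg_right (hxy i) (Rat.cast_nonneg.mpr (hD i j))
  -- (a) → (c)
  have atoc : (Q ⊆ {x | ∀ i, 0 ≤ x i}) →
      (∀ x ∈ Q, ∀ y : Fin s → ℝ, (∀ i, x i ≤ y i) → y ∈ Q) →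
      (∃ (m : ℕ) (D : Matrix (Fin s) (Fin m) ℚ), (∀ i j, 0 ≤ D i j) ∧
        Q = {x | (∀ i, 0 ≤ x i) ∧ ∀ j, (1 : ℝ) ≤ ∑ i, x i * (D i j : ℝ)}) := by
    intro h1 h2
    by_cases hne : Q.Nonempty
    · obtain ⟨x₀, hx₀⟩ := hne
      rw [hQdef] at h1 h2
      have hx₀' : ∀ j, (b j:ℝ) ≤ ∑ i, (A j i:ℝ) * x₀ i := by
        rw [hQdef] at hx₀
        exact hx₀
      have hA := A_nonneg A b h2 x₀ hx₀'
      set T := univ.filter (fun j : Fin k => 0 < b j) with hT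
      set eT := T.orderIsoOfFin rfl with heT
      have hbT : ∀ j : Fin T.card, 0 < b (eT j : Fin k) := by
        intro j
        exact (Finset.mem_filter.1 (eT j).2).2
      refine ⟨T.card, fun i j => A (eT j : Fin k) i / b (eT j : Fin k),
        fun i j => div_nonneg (hA _ i) (le_of_lt (hbT j)), ?_⟩
      rw [hQdef]
      ext x
      simp only [Set.mem_setOf_eq]
      constructor
      · intro hx
        refine ⟨h1 hx, fun j => ?_⟩
        have hbjR : (0:ℝ) < ((b (eT j : Fin k) : ℚ):ℝ) := by exact_mod_cast hbT j
        have hc := hx (eT j : Fin k)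
        have hsum : ∑ i, x i * ((A (eT j : Fin k) i / b (eT j : Fin k) : ℚ):ℝ)
            = (∑ i, (A (eT j : Fin k) i : ℝ) * x i) / ((b (eT j : Fin k) : ℚ):ℝ) := by
          rw [Finset.sum_div]
          refine Finset.sum_congr rfl (fun i _ => ?_)
          push_cast
          ring
        rw [hsum, one_le_div hbjR]
        exact hc
      · rintro ⟨hx0, hx⟩ j
        by_cases hbj : 0 < b j
        · have hjT : j ∈ T := by
            rw [hT, Finset.mem_filter]
            exact ⟨Finset.mem_univ j, hbj⟩
          obtain ⟨j', hj'⟩ := eT.surjective ⟨j, hjT⟩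
          have hjj : (eT j' : Fin k) = j := by rw [hj']
          have hc := hx j'
          rw [hjj] at hc
          have hbjR : (0:ℝ) < ((b j : ℚ):ℝ) := by exact_mod_cast hbj
          have hsum : ∑ i, x i * ((A j i / b j : ℚ):ℝ)
              = (∑ i, (A j i : ℝ) * x i) / ((b j : ℚ):ℝ) := by
            rw [Finset.sum_div]
            refine Finset.sum_congr rfl (fun i _ => ?_)
            push_cast
            ring
          rw [hsum, one_le_div hbjR] at hc
          exact hc
        · push_neg at hbj
          have hb' : ((b j : ℚ):ℝ) ≤ 0 := by exact_mod_cast hbj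
          have hs : (0:ℝ) ≤ ∑ i, (A j i:ℝ) * x i :=
            Finset.sum_nonneg (fun i _ => mul_nonneg (Rat.cast_nonneg.mpr (hA j i)) (hx0 i))
          linarith
    · refine ⟨1, 0, fun i j => le_refl 0, ?_⟩
      rw [Set.not_nonempty_iff_eq_empty.1 hne]
      ext x
      simp only [Set.mem_empty_iff_false, false_iff, Set.mem_setOf_eq, not_and]
      intro hx0 hall
      have := hall 0
      simp only [Matrix.zero_apply, Rat.cast_zero, mul_zero, Finset.sum_const_zero] at this
      linarith
  exact ⟨⟨fun h => atob h.1 h.2, btoa⟩,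
    ⟨fun hb => atoc (btoa hb).1 (btoa hb).2, fun hc => atob (ctoa hc).1 (ctoa hc).2⟩⟩
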